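/- Let [M, M̄] ∈ ℝ^{m×m} be an orthogonal matrix with M ∈ ℝ^{m×k}, let Z ∈ ℝ^{m×ℓ} be a matrix with k ≤ ℓ, suppose Z_k := Mᵀ Z ∈ ℝ^{k×ℓ} has full row rank k, and set Y_k = Z Z_k⁺ and T_k = (M̄ᵀ Z) Z_k⁺. Then Mᵀ (I_m − π(Y_k)) M = T_kᵀ (I_{m−k} + T_k T_kᵀ)⁻¹ T_k. -/
import Mathlib


open MeasureTheory ProbabilityTheory Matrix

/-- Frobenius norm of a real matrix. -/
noncomputable def frob {α β : Type*} [Fintype α] [Fintype β] (M : Matrix α β ℝ) : ℝ :=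
  Real.sqrt (∑ i, ∑ j, M i j ^ 2)

/-- Orthogonal projection `π(M) = M M⁺` onto the range of a full column rank matrix `M`,
via the explicit formula `M (Mᵀ M)⁻¹ Mᵀ` for the Moore-Penrose inverse. -/
noncomputable def proj {α β : Type*} [Fintype α] [Fintype β] [DecidableEq β]
    (M : Matrix α β ℝ) : Matrix α α ℝ :=
  M * (Mᵀ * M)⁻¹ * Mᵀ

/-- Moore-Penrose inverse `M⁺ = Mᵀ (M Mᵀ)⁻¹` of a full row rank matrix `M`. -/
noncomputable def rpinv {α β : Type*} [Fintype α] [Fintype β] [DecidableEq α]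
    (M : Matrix α β ℝ) : Matrix β α ℝ :=
  Mᵀ * (M * Mᵀ)⁻¹

/-- `X : Ω → ι → ℝ` is a centered Gaussian vector with covariance matrix `K`:
every linear functional `⟨a, X⟩` is a real Gaussian with mean `0` and variance `aᵀ K a`. -/
def IsCenteredGaussian {Ω : Type*} [MeasurableSpace Ω] (μ : Measure Ω)
    {ι : Type*} [Fintype ι] (X : Ω → ι → ℝ) (K : Matrix ι ι ℝ) : Prop :=
  ∀ a : ι → ℝ,
    μ.map (fun ω => ∑ i, a i * X ω i) =
      gaussianReal 0 (Real.toNNReal (∑ i, ∑ j, a i * K i j * a j))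

lemma aux_isUnit {n : Type*} [Fintype n] [DecidableEq n] (A : Matrix n n ℝ)
    (h : A.rank = Fintype.card n) : IsUnit A := by
  rw [← Matrix.mulVec_surjective_iff_isUnit]
  have hr : LinearMap.range A.mulVecLin = ⊤ :=
    Submodule.eq_top_of_finrank_eq (by
      rw [show Module.finrank ℝ ↥(LinearMap.range A.mulVecLin) = A.rank from rfl, h,
        Module.finrank_fintype_fun_eq_card])
  exact fun v => LinearMap.range_eq_top.mp hr v

theorem stmt_17
    (k m' ℓ : ℕ) (hkℓ : k ≤ ℓ)
    (W : Matrix (Fin k ⊕ Fin m') (Fin k ⊕ Fin m') ℝ) (hW : Wᵀ * W = 1)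
    (M : Matrix (Fin k ⊕ Fin m') (Fin k) ℝ) (hM : M = W.submatrix id Sum.inl)
    (Mb : Matrix (Fin k ⊕ Fin m') (Fin m') ℝ) (hMb : Mb = W.submatrix id Sum.inr)
    (Z : Matrix (Fin k ⊕ Fin m') (Fin ℓ) ℝ)
    (Zk : Matrix (Fin k) (Fin ℓ) ℝ) (hZk : Zk = Mᵀ * Z) (hZkrank : Zk.rank = k)
    (Yk : Matrix (Fin k ⊕ Fin m') (Fin k) ℝ) (hYk : Yk = Z * rpinv Zk)
    (Tk : Matrix (Fin m') (Fin k) ℝ) (hTk : Tk = Mbᵀ * Z * rpinv Zk) :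
    Mᵀ * (1 - proj Yk) * M = Tkᵀ * (1 + Tk * Tkᵀ)⁻¹ * Tk := by
  -- entrywise orthogonality of W
  have hWup : ∀ a b, (∑ r, W r a * W r b) = if a = b then (1:ℝ) else 0 := by
    intro a b
    have := congrFun (congrFun hW a) b
    simpa [Matrix.mul_apply, Matrix.one_apply] using this
  have hMM : Mᵀ * M = 1 := by
    ext i j
    have := hWup (Sum.inl i) (Sum.inl j)
    simp only [hM, Matrix.mul_apply, Matrix.transpose_apply, Matrix.submatrix_apply, id]
    rw [this]
    simp [Matrix.one_apply]
  have hMMb : Mᵀ * Mb = 0 := by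
    ext i j
    have := hWup (Sum.inl i) (Sum.inr j)
    simp only [hM, hMb, Matrix.mul_apply, Matrix.transpose_apply, Matrix.submatrix_apply, id]
    rw [this]
    simp
  have hMbMb : Mbᵀ * Mb = 1 := by
    ext i j
    have := hWup (Sum.inr i) (Sum.inr j)
    simp only [hMb, Matrix.mul_apply, Matrix.transpose_apply, Matrix.submatrix_apply, id]
    rw [this]
    simp [Matrix.one_apply]
  have hMbM : Mbᵀ * M = 0 := by
    have := congrArg Matrix.transpose hMMb
    simpa [Matrix.transpose_mul] using this
  have hWW : W * Wᵀ = 1 := by rwa [mul_eq_one_comm] at hW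
  have hsum : M * Mᵀ + Mb * Mbᵀ = 1 := by
    ext i j
    have h1 := congrFun (congrFun hWW i) j
    simp only [Matrix.mul_apply, Matrix.transpose_apply] at h1
    rw [Fintype.sum_sum_type] at h1
    simpa [hM, hMb, Matrix.add_apply, Matrix.mul_apply] using h1
  -- Zk right inverse
  have hZZt : IsUnit (Zk * Zkᵀ) :=
    aux_isUnit _ (by rw [Matrix.rank_self_mul_transpose, hZkrank, Fintype.card_fin])
  have hrp : Zk * rpinv Zk = 1 := by
    rw [rpinv, ← Matrix.mul_assoc,
      Matrix.mul_nonsing_inv _ ((Matrix.isUnit_iff_isUnit_det _).mp hZZt)]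
  have hMY : Mᵀ * Yk = 1 := by rw [hYk, ← Matrix.mul_assoc, ← hZk, hrp]
  have hMbY : Mbᵀ * Yk = Tk := by rw [hYk, hTk, ← Matrix.mul_assoc]
  have hY : Yk = M + Mb * Tk := by
    have h2 : (M * Mᵀ + Mb * Mbᵀ) * Yk = Yk := by rw [hsum, Matrix.one_mul]
    rw [← h2, Matrix.add_mul, Matrix.mul_assoc, Matrix.mul_assoc, hMY, hMbY, Matrix.mul_one]
  have hYtM : Ykᵀ * M = 1 := by
    have := congrArg Matrix.transpose hMY
    simpa [Matrix.transpose_mul] using this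
  have hS : Ykᵀ * Yk = 1 + Tkᵀ * Tk := by
    rw [hY, Matrix.transpose_add, Matrix.transpose_mul, Matrix.add_mul, Matrix.mul_add,
      Matrix.mul_add, hMM]
    rw [← Matrix.mul_assoc Mᵀ Mb Tk, hMMb, Matrix.zero_mul]
    rw [Matrix.mul_assoc Tkᵀ Mbᵀ M, hMbM, Matrix.mul_zero]
    rw [Matrix.mul_assoc Tkᵀ Mbᵀ (Mb * Tk), ← Matrix.mul_assoc Mbᵀ Mb Tk, hMbMb,
      Matrix.one_mul]
    abel
  -- positive definiteness
  have hSpd : (1 + Tkᵀ * Tk).PosDef := by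
    have := Matrix.posSemidef_conjTranspose_mul_self Tk
    rw [Matrix.conjTranspose_eq_transpose_of_trivial] at this
    exact Matrix.PosDef.add_posSemidef Matrix.PosDef.one this
  have hS'pd : (1 + Tk * Tkᵀ).PosDef := by
    have := Matrix.posSemidef_self_mul_conjTranspose Tk
    rw [Matrix.conjTranspose_eq_transpose_of_trivial] at this
    exact Matrix.PosDef.add_posSemidef Matrix.PosDef.one this
  have hSd : IsUnit (1 + Tkᵀ * Tk).det := (Matrix.isUnit_iff_isUnit_det _).mp hSpd.isUnit
  have hS'd : IsUnit (1 + Tk * Tkᵀ).det := (Matrix.isUnit_iff_isUnit_det _).mp hS'pd.isUnit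
  -- LHS = 1 - S⁻¹
  have hproj : proj Yk = Yk * (1 + Tkᵀ * Tk)⁻¹ * Ykᵀ := by rw [proj, hS]
  have hLHS : Mᵀ * (1 - proj Yk) * M = 1 - (1 + Tkᵀ * Tk)⁻¹ := by
    rw [Matrix.mul_sub, Matrix.sub_mul, Matrix.mul_one, hMM, hproj]
    congr 1
    rw [← Matrix.mul_assoc, ← Matrix.mul_assoc, hMY, Matrix.one_mul, Matrix.mul_assoc, hYtM,
      Matrix.mul_one]
  -- push-through
  have hcomm : Tkᵀ * (1 + Tk * Tkᵀ) = (1 + Tkᵀ * Tk) * Tkᵀ := by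
    rw [Matrix.mul_add, Matrix.add_mul, Matrix.mul_one, Matrix.one_mul, Matrix.mul_assoc]
  have hswap : Tkᵀ * (1 + Tk * Tkᵀ)⁻¹ = (1 + Tkᵀ * Tk)⁻¹ * Tkᵀ := by
    have h3 : (1 + Tkᵀ * Tk)⁻¹ * (Tkᵀ * (1 + Tk * Tkᵀ)) * (1 + Tk * Tkᵀ)⁻¹ =
        (1 + Tkᵀ * Tk)⁻¹ * ((1 + Tkᵀ * Tk) * Tkᵀ) * (1 + Tk * Tkᵀ)⁻¹ := by rw [hcomm]
    rw [← Matrix.mul_assoc, ← Matrix.mul_assoc] at h3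
    rw [Matrix.nonsing_inv_mul _ hSd, Matrix.one_mul] at h3
    rw [Matrix.mul_assoc _ Tkᵀ (1 + Tk * Tkᵀ), Matrix.mul_assoc, Matrix.mul_assoc,
      Matrix.mul_nonsing_inv _ hS'd, Matrix.mul_one] at h3
    exact h3.symm ▸ rfl
  rw [hLHS, hswap, Matrix.mul_assoc]
  have h5 : (1 + Tkᵀ * Tk)⁻¹ + (1 + Tkᵀ * Tk)⁻¹ * (Tkᵀ * Tk) = 1 := by
    have := Matrix.nonsing_inv_mul _ hSd
    rwa [Matrix.mul_add, Matrix.mul_one] at this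
  exact (eq_sub_of_add_eq' h5).symm
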